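/- Let K ≥ 1, let w : Fin K → ℝ be nonnegative weights with ∑_i w_i = 1, let μ : Fin K → ℝ, and let v : Fin K → ℝ with v_i > 0 for all i. Then the squared mixture-of-Gaussians density integrates to ∫_ℝ ( ∑_{i} w_i·N(x; μ_i, v_i) )² dx = ∑_{i} ∑_{j} w_i·w_j·N(μ_i; μ_j, v_i + v_j), and consequently the Tsallis entropy of the mixture density π(x) = ∑_i w_i·N(x; μ_i, v_i), namely (1/2)·(1 − ∫_ℝ π(x)² dx), equals (1/2)·(1 − ∑_{i}∑_{j} w_i·w_j·N(μ_i; μ_j, v_i + v_j)). (Theorem 7 of the paper, univariate case: the Tsallis entropy of a mixture density network has an analytic form.) -/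

import Mathlib

open MeasureTheory Finset

/-- The univariate Gaussian density `N(x; μ, v) = (2πv)^{-1/2}·exp(−(x−μ)²/(2v))`. -/
noncomputable def gaussPdf (μ v x : ℝ) : ℝ :=
  (Real.sqrt (2 * Real.pi * v))⁻¹ * Real.exp (-((x - μ) ^ 2) / (2 * v))

lemma integrable_gaussPdf (μ : ℝ) {v : ℝ} (hv : 0 < v) :
    Integrable (fun x => gaussPdf μ v x) := by
  have h : Integrable (fun x : ℝ => Real.exp (-(1 / (2 * v)) * x ^ 2)) :=
    integrable_exp_neg_mul_sq (by positivity)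
  have h2 := (h.comp_sub_right μ).const_mul (Real.sqrt (2 * Real.pi * v))⁻¹
  refine h2.congr (Filter.Eventually.of_forall fun x => ?_)
  simp only [gaussPdf]
  congr 1
  rw [neg_div, neg_mul]
  congr 1
  field_simp

lemma integral_gaussPdf (μ : ℝ) {v : ℝ} (hv : 0 < v) :
    ∫ x : ℝ, gaussPdf μ v x = 1 := by
  have hconv : ∀ x : ℝ, gaussPdf μ v x
      = (Real.sqrt (2 * Real.pi * v))⁻¹ * Real.exp (-(1 / (2 * v)) * (x - μ) ^ 2) := by
    intro x
    simp only [gaussPdf]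
    congr 1
    rw [neg_mul, neg_div]
    congr 1
    field_simp
  simp_rw [hconv]
  rw [integral_const_mul, integral_sub_right_eq_self
    (fun x => Real.exp (-(1 / (2 * v)) * x ^ 2)) μ, integral_gaussian]
  rw [show Real.pi / (1 / (2 * v)) = 2 * Real.pi * v by field_simp]
  rw [inv_mul_cancel₀]
  positivity

lemma gaussPdf_mul (μ1 μ2 : ℝ) {v1 v2 : ℝ} (h1 : 0 < v1) (h2 : 0 < v2) (x : ℝ) :
    gaussPdf μ1 v1 x * gaussPdf μ2 v2 x
      = gaussPdf μ2 (v1 + v2) μ1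
        * gaussPdf ((μ1 * v2 + μ2 * v1) / (v1 + v2)) (v1 * v2 / (v1 + v2)) x := by
  have h12 : 0 < v1 + v2 := by linarith
  simp only [gaussPdf]
  rw [mul_mul_mul_comm]
  conv_rhs => rw [mul_mul_mul_comm]
  rw [← Real.exp_add, ← Real.exp_add, ← Real.sqrt_inv, ← Real.sqrt_inv, ← Real.sqrt_inv,
    ← Real.sqrt_inv, ← Real.sqrt_mul (by positivity), ← Real.sqrt_mul (by positivity)]
  congr 1
  · congr 1
    rw [← mul_inv, ← mul_inv]
    congr 1
    field_simp
  · congr 1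
    field_simp
    ring

/-- Theorem 7 (univariate case): the squared mixture-of-Gaussians density
integrates to `∑ᵢ∑ⱼ wᵢwⱼ·N(μᵢ; μⱼ, vᵢ + vⱼ)`, hence the Tsallis entropy of a
mixture density has the analytic form
`(1/2)·(1 − ∑ᵢ∑ⱼ wᵢwⱼ·N(μᵢ; μⱼ, vᵢ + vⱼ))`. -/
theorem stmt16 (K : ℕ) (hK : 1 ≤ K)
    (w : Fin K → ℝ) (hw0 : ∀ i, 0 ≤ w i) (hw1 : ∑ i, w i = 1)
    (μ : Fin K → ℝ) (v : Fin K → ℝ) (hv : ∀ i, 0 < v i) :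
    (∫ x : ℝ, (∑ i, w i * gaussPdf (μ i) (v i) x) ^ 2
        = ∑ i, ∑ j, w i * w j * gaussPdf (μ j) (v i + v j) (μ i)) ∧
    ((1 / 2) * (1 - ∫ x : ℝ, (∑ i, w i * gaussPdf (μ i) (v i) x) ^ 2)
        = (1 / 2) * (1 - ∑ i, ∑ j, w i * w j * gaussPdf (μ j) (v i + v j) (μ i))) := by
  have key : ∫ x : ℝ, (∑ i, w i * gaussPdf (μ i) (v i) x) ^ 2
      = ∑ i, ∑ j, w i * w j * gaussPdf (μ j) (v i + v j) (μ i) := by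
    have hterm : ∀ i j : Fin K, ∀ x : ℝ,
        (w i * gaussPdf (μ i) (v i) x) * (w j * gaussPdf (μ j) (v j) x)
          = (w i * w j * gaussPdf (μ j) (v i + v j) (μ i))
            * gaussPdf ((μ i * v j + μ j * v i) / (v i + v j))
                (v i * v j / (v i + v j)) x := by
      intro i j x
      rw [show (w i * gaussPdf (μ i) (v i) x) * (w j * gaussPdf (μ j) (v j) x)
          = w i * w j * (gaussPdf (μ i) (v i) x * gaussPdf (μ j) (v j) x) by ring,
        gaussPdf_mul (μ i) (μ j) (hv i) (hv j) x]
      ring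
    have hsq : ∀ x : ℝ, (∑ i, w i * gaussPdf (μ i) (v i) x) ^ 2
        = ∑ i, ∑ j, (w i * w j * gaussPdf (μ j) (v i + v j) (μ i))
            * gaussPdf ((μ i * v j + μ j * v i) / (v i + v j))
                (v i * v j / (v i + v j)) x := by
      intro x
      rw [sq, Finset.sum_mul_sum]
      exact Finset.sum_congr rfl fun i _ => Finset.sum_congr rfl fun j _ => hterm i j x
    have hpos : ∀ i j : Fin K, 0 < v i * v j / (v i + v j) := fun i j => by
      have := hv i; have := hv j; positivity
    simp_rw [hsq]
    rw [integral_finset_sum _ (fun i _ => integrable_finset_sum _ (fun j _ =>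
      (integrable_gaussPdf _ (hpos i j)).const_mul _))]
    refine Finset.sum_congr rfl fun i _ => ?_
    rw [integral_finset_sum _ (fun j _ => (integrable_gaussPdf _ (hpos i j)).const_mul _)]
    refine Finset.sum_congr rfl fun j _ => ?_
    rw [integral_const_mul, integral_gaussPdf _ (hpos i j), mul_one]
  exact ⟨key, by rw [key]⟩
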